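/- Let A be a finite-dimensional split commutative semisimple Frobenius algebra over a field K of characteristic zero with Frobenius functional λ, dual bases {b_i}, {b_i*}, and for a character φ set α_φ = Σ_i φ(b_i*) b_i and f_φ = φ(α_φ). If f_φ ≠ 0, then α_φ / f_φ is an idempotent of A, and it is the minimal idempotent corresponding to φ, i.e. φ(α_φ/f_φ) = 1 and φ'(α_φ/f_φ) = 0 for all characters φ' ≠ φ. -/

import Mathlib

open scoped BigOperators

/-- With `α_φ = ∑ i, φ(bd i) • b i` and `f_φ = φ(α_φ) ≠ 0`, the
element `α_φ / f_φ` is the minimal idempotent corresponding to the character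
`φ`: it is idempotent, `φ` takes the value `1` on it, and every other
character vanishes on it. -/
theorem stmt1 {K : Type*} [Field K] [CharZero K]
    {A : Type*} [CommRing A] [Algebra K A] [FiniteDimensional K A]
    {ι : Type*} [Fintype ι] [DecidableEq ι]
    (split : A ≃ₐ[K] (ι → K))
    (lam : A →ₗ[K] K)
    (hnd : ∀ a : A, (∀ c : A, lam (a * c) = 0) → a = 0)
    (b bd : ι → A)
    (hb : Module.Basis ι K A) (hbe : ∀ i, hb i = b i)
    (hdual : ∀ i j, lam (b i * bd j) = if i = j then 1 else 0)
    (φ : A →ₐ[K] K)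
    (hf : φ (∑ i, φ (bd i) • b i) ≠ 0) :
    ((φ (∑ i, φ (bd i) • b i))⁻¹ • ∑ i, φ (bd i) • b i) *
        ((φ (∑ i, φ (bd i) • b i))⁻¹ • ∑ i, φ (bd i) • b i) =
      (φ (∑ i, φ (bd i) • b i))⁻¹ • ∑ i, φ (bd i) • b i ∧
    φ ((φ (∑ i, φ (bd i) • b i))⁻¹ • ∑ i, φ (bd i) • b i) = 1 ∧
    ∀ φ' : A →ₐ[K] K, φ' ≠ φ →
      φ' ((φ (∑ i, φ (bd i) • b i))⁻¹ • ∑ i, φ (bd i) • b i) = 0 := by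
  set α : A := ∑ i, φ (bd i) • b i with hα
  set f : K := φ α with hfdef
  have hnontriv : Nontrivial A := by
    by_contra h
    rw [not_nontrivial_iff_subsingleton] at h
    exact hf (by rw [hfdef, Subsingleton.elim α (0:A), map_zero])
  have hcard : Fintype.card ι = Module.finrank K A :=
    (Module.finrank_eq_card_basis hb).symm
  have hindep : LinearIndependent K bd := by
    rw [Fintype.linearIndependent_iff]
    intro g hg j
    have h1 : lam (b j * ∑ i, g i • bd i) = g j := by
      rw [Finset.mul_sum]
      simp [mul_smul_comm, hdual]
    rw [hg] at h1
    simpa using h1.symm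
  haveI : Nonempty ι := by
    rw [← Fintype.card_pos_iff, hcard]
    exact Module.finrank_pos
  let hbd : Module.Basis ι K A := basisOfLinearIndependentOfCardEqFinrank hindep hcard
  have hbde : ∀ i, hbd i = bd i := fun i =>
    congrFun (coe_basisOfLinearIndependentOfCardEqFinrank hindep hcard) i
  -- key evaluation: lam (α * x) = φ x
  have hval : ∀ x : A, lam (α * x) = φ x := by
    have heq : (lam ∘ₗ LinearMap.mulLeft K α) = φ.toLinearMap := by
      apply hbd.ext
      intro j
      simp only [LinearMap.comp_apply, LinearMap.mulLeft_apply, AlgHom.toLinearMap_apply, hbde]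
      rw [hα, Finset.sum_mul]
      simp [smul_mul_assoc, hdual]
    intro x
    have := congrArg (fun g : A →ₗ[K] K => g x) heq
    simpa using this
  -- key lemma: a * α = φ a • α
  have key : ∀ a : A, a * α = φ a • α := by
    intro a
    have hz : ∀ c : A, lam ((a * α - φ a • α) * c) = 0 := by
      intro c
      have h1 : (a * α - φ a • α) * c = α * (a * c) - φ a • (α * c) := by
        rw [sub_mul, smul_mul_assoc]
        ring_nf
      rw [h1, map_sub, map_smul, hval, hval, map_mul, smul_eq_mul]
      ring
    have := hnd _ hz
    rwa [sub_eq_zero] at this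
  have hαα : α * α = f • α := key α
  refine ⟨?_, ?_, ?_⟩
  · rw [smul_mul_smul_comm, hαα, smul_smul]
    congr 1
    field_simp
  · rw [map_smul, ← hfdef, smul_eq_mul, inv_mul_cancel₀ hf]
  · intro φ' hne
    obtain ⟨a, ha⟩ := DFunLike.ne_iff.mp hne
    have h2 := congrArg φ' (key a)
    rw [map_mul, map_smul, smul_eq_mul] at h2
    have hz : φ' α = 0 := by
      by_contra h
      exact ha (mul_right_cancel₀ h h2)
    rw [map_smul, hz, smul_zero]
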